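/- Let F be a finite field, Q ∈ F[t] monic nonconstant, and m ∈ F[t] a monic irreducible factor of Q. Then there exists a function f : F[t]/(Q) → ℂ with |f| ≡ 1 such that 𝔼_{y∈F[t]/(Q)} f(x + m·y) = f(x) for every x ∈ F[t]/(Q), while 𝔼_{z∈F[t]/(Q)} f(z) = 0. In particular the L²-norm of x ↦ 𝔼_y f(x+my) − 𝔼_z f(z) equals 1. -/

import Mathlib

theorem stmt_5 {F : Type*} [Field F] [Fintype F] (Q m : Polynomial F) (hQ : Q.Monic)
    (hQ0 : 0 < Q.natDegree) (hm : m.Monic) (hirr : Irreducible m) (hdvd : m ∣ Q)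
    [Fintype (Polynomial F ⧸ Ideal.span {Q})] :
    ∃ f : (Polynomial F ⧸ Ideal.span {Q}) → ℂ,
      (∀ x, ‖f x‖ = 1) ∧
      (∀ x : Polynomial F ⧸ Ideal.span {Q},
        (∑ y : Polynomial F ⧸ Ideal.span {Q},
            f (x + Ideal.Quotient.mk (Ideal.span {Q}) m * y)) /
          (Fintype.card (Polynomial F ⧸ Ideal.span {Q}) : ℂ) = f x) ∧
      (∑ z : Polynomial F ⧸ Ideal.span {Q}, f z) /
          (Fintype.card (Polynomial F ⧸ Ideal.span {Q}) : ℂ) = 0 ∧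
      (∑ x : Polynomial F ⧸ Ideal.span {Q},
          ‖(∑ y : Polynomial F ⧸ Ideal.span {Q},
              f (x + Ideal.Quotient.mk (Ideal.span {Q}) m * y)) /
            (Fintype.card (Polynomial F ⧸ Ideal.span {Q}) : ℂ) -
            (∑ z : Polynomial F ⧸ Ideal.span {Q}, f z) /
              (Fintype.card (Polynomial F ⧸ Ideal.span {Q}) : ℂ)‖ ^ 2) /
        (Fintype.card (Polynomial F ⧸ Ideal.span {Q}) : ℝ) = 1 := by
  have hle : Ideal.span {Q} ≤ Ideal.span {m} :=
    (Ideal.span_singleton_le_span_singleton).2 hdvd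
  let φ : (Polynomial F ⧸ Ideal.span {Q}) →+* (Polynomial F ⧸ Ideal.span {m}) :=
    Ideal.Quotient.factor hle
  have hsurj : Function.Surjective φ := by
    intro w
    obtain ⟨p, rfl⟩ := Ideal.Quotient.mk_surjective w
    exact ⟨Ideal.Quotient.mk _ p, Ideal.Quotient.factor_mk hle p⟩
  haveI : (Ideal.span {m}).IsMaximal :=
    PrincipalIdealRing.isMaximal_of_irreducible hirr
  letI : Field (Polynomial F ⧸ Ideal.span {m}) := Ideal.Quotient.field _
  haveI : Finite (Polynomial F ⧸ Ideal.span {m}) := Finite.of_surjective φ hsurj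
  let χ : AddChar (Polynomial F ⧸ Ideal.span {m}) ℂ :=
    AddChar.FiniteField.primitiveChar_to_Complex (Polynomial F ⧸ Ideal.span {m})
  have hχprim := AddChar.FiniteField.primitiveChar_to_Complex_isPrimitive
    (Polynomial F ⧸ Ideal.span {m})
  have hχne : χ ≠ 1 := fun h =>
    hχprim (a := 1) one_ne_zero (by rw [AddChar.mulShift_one]; exact h)
  let ψ : AddChar (Polynomial F ⧸ Ideal.span {Q}) ℂ := χ.compAddMonoidHom φ.toAddMonoidHom
  have hψx : ∀ x, ψ x = χ (φ x) := fun x => rfl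
  have hψne : ψ ≠ 1 := by
    intro h
    apply hχne
    ext w
    obtain ⟨x, rfl⟩ := hsurj w
    have := DFunLike.congr_fun h x
    simpa [hψx] using this
  have hm0 : φ (Ideal.Quotient.mk (Ideal.span {Q}) m) = 0 := by
    rw [show φ (Ideal.Quotient.mk (Ideal.span {Q}) m)
        = Ideal.Quotient.mk (Ideal.span {m}) m from Ideal.Quotient.factor_mk hle m]
    exact Ideal.Quotient.eq_zero_iff_mem.2 (Ideal.subset_span rfl)
  have hcard : (0 : ℕ) < Fintype.card (Polynomial F ⧸ Ideal.span {Q}) := Fintype.card_pos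
  have hcardC : (Fintype.card (Polynomial F ⧸ Ideal.span {Q}) : ℂ) ≠ 0 :=
    Nat.cast_ne_zero.2 hcard.ne'
  have havgC : ∀ c : ℂ, (∑ _x : Polynomial F ⧸ Ideal.span {Q}, c) /
      (Fintype.card (Polynomial F ⧸ Ideal.span {Q}) : ℂ) = c := by
    intro c
    rw [Finset.sum_const, Finset.card_univ, nsmul_eq_mul]
    exact mul_div_cancel_left₀ c hcardC
  have hconst : ∀ x y : Polynomial F ⧸ Ideal.span {Q},
      ψ (x + Ideal.Quotient.mk (Ideal.span {Q}) m * y) = ψ x := by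
    intro x y
    simp [hψx, map_add, map_mul, hm0]
  have hsum0 : (∑ z : Polynomial F ⧸ Ideal.span {Q}, ψ z) = 0 :=
    AddChar.sum_eq_zero_of_ne_one hψne
  have havg : ∀ x : Polynomial F ⧸ Ideal.span {Q},
      (∑ y : Polynomial F ⧸ Ideal.span {Q},
          ψ (x + Ideal.Quotient.mk (Ideal.span {Q}) m * y)) /
        (Fintype.card (Polynomial F ⧸ Ideal.span {Q}) : ℂ) = ψ x := by
    intro x
    rw [Finset.sum_congr rfl fun y _ => hconst x y]
    exact havgC (ψ x)
  refine ⟨fun x => ψ x, fun x => AddChar.norm_apply ψ x, havg, ?_, ?_⟩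
  · rw [hsum0, zero_div]
  · have h1 : ∀ x : Polynomial F ⧸ Ideal.span {Q},
        ‖(∑ y : Polynomial F ⧸ Ideal.span {Q},
            ψ (x + Ideal.Quotient.mk (Ideal.span {Q}) m * y)) /
          (Fintype.card (Polynomial F ⧸ Ideal.span {Q}) : ℂ) -
          (∑ z : Polynomial F ⧸ Ideal.span {Q}, ψ z) /
            (Fintype.card (Polynomial F ⧸ Ideal.span {Q}) : ℂ)‖ ^ 2 = 1 := by
      intro x
      rw [havg x, hsum0, zero_div, sub_zero, AddChar.norm_apply, one_pow]
    rw [Finset.sum_congr rfl fun x _ => h1 x, Finset.sum_const, Finset.card_univ,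
      nsmul_eq_mul, mul_one, div_self (Nat.cast_ne_zero.2 hcard.ne')]
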